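/- Let S ⊆ ℝ², let K ≥ 2, let c₁, …, c_K ∈ ℝ², and suppose there exist indices k₁, k₂ ∈ {1, …, K} such that every c_k is a nonnegative linear combination of c_{k₁} and c_{k₂}. Then the efficient set of the K-objective family (c₁, …, c_K) over S equals the efficient set of the two-objective family (c_{k₁}, c_{k₂}) over S. -/
import Mathlib


open Matrix

/-- A point `x` is efficient (Pareto optimal) for the family of linear objectives
`y ↦ c k ⬝ᵥ y` over `S` if `x ∈ S` and no `y ∈ S` dominates it. -/
def Efficient {n K : ℕ} (S : Set (Fin n → ℝ)) (c : Fin K → (Fin n → ℝ))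
    (x : Fin n → ℝ) : Prop :=
  x ∈ S ∧ ¬ ∃ y ∈ S, (∀ k, c k ⬝ᵥ x ≤ c k ⬝ᵥ y) ∧ ∃ k₀, c k₀ ⬝ᵥ x < c k₀ ⬝ᵥ y

/-- Theorem 4.5 (forward): if two of the gradients generate the whole gradient cone,
the `K`-objective problem has the same efficient set as the corresponding
two-objective problem. -/
theorem efficient_eq_two_objective {K : ℕ} (hK : 2 ≤ K) (S : Set (Fin 2 → ℝ))
    (c : Fin K → (Fin 2 → ℝ)) (k₁ k₂ : Fin K)
    (hcone : ∀ k, ∃ a b : ℝ, 0 ≤ a ∧ 0 ≤ b ∧ c k = a • c k₁ + b • c k₂) :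
    {x | Efficient S c x} = {x | Efficient S ![c k₁, c k₂] x} := by
  ext x
  simp only [Set.mem_setOf_eq, Efficient]
  constructor
  · rintro ⟨hx, hne⟩
    refine ⟨hx, ?_⟩
    rintro ⟨y, hy, hle, k₀, hk₀⟩
    apply hne
    refine ⟨y, hy, ?_, ?_⟩
    · intro k
      obtain ⟨a, b, ha, hb, hk⟩ := hcone k
      have h1 := hle 0
      have h2 := hle 1
      simp only [Matrix.cons_val_zero, Matrix.cons_val_one, Matrix.head_cons] at h1 h2
      rw [hk]
      simp only [add_dotProduct, smul_dotProduct, smul_eq_mul]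
      have := mul_le_mul_of_nonneg_left h1 ha
      have := mul_le_mul_of_nonneg_left h2 hb
      linarith
    · fin_cases k₀ <;> simp only [Matrix.cons_val_zero, Matrix.cons_val_one,
        Matrix.head_cons] at hk₀
      · exact ⟨k₁, hk₀⟩
      · exact ⟨k₂, hk₀⟩
  · rintro ⟨hx, hne⟩
    refine ⟨hx, ?_⟩
    rintro ⟨y, hy, hle, k₀, hk₀⟩
    apply hne
    have h1 := hle k₁
    have h2 := hle k₂
    refine ⟨y, hy, ?_, ?_⟩
    · intro k
      fin_cases k <;> simp only [Matrix.cons_val_zero, Matrix.cons_val_one, Matrix.head_cons] <;> assumption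
    · obtain ⟨a, b, ha, hb, hk⟩ := hcone k₀
      rw [hk] at hk₀
      simp only [add_dotProduct, smul_dotProduct, smul_eq_mul] at hk₀
      by_cases hs : c k₁ ⬝ᵥ x < c k₁ ⬝ᵥ y
      · exact ⟨0, by simp only [Matrix.cons_val_zero]; exact hs⟩
      · refine ⟨1, ?_⟩
        push_neg at hs
        have hx1 : c k₁ ⬝ᵥ x = c k₁ ⬝ᵥ y := le_antisymm h1 hs
        have hb' : b * (c k₂ ⬝ᵥ x) < b * (c k₂ ⬝ᵥ y) := by
          nlinarith [mul_le_mul_of_nonneg_left h2 hb]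
        have : c k₂ ⬝ᵥ x < c k₂ ⬝ᵥ y := by
          rcases lt_or_eq_of_le h2 with h | h
          · exact h
          · exfalso; rw [h] at hb'; exact lt_irrefl _ hb'
        simp only [Matrix.cons_val_one, Matrix.head_cons]; exact this
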